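/- For every n ≥ 1 and every orientation, the oriented star K⃗_{1,n} is not {2}-antimagic. -/

import Mathlib

/-- `relPow A k u v` : there is a directed walk of length `k` from `u` to `v`
along the arc relation `A`. -/
def relPow {V : Type*} (A : V → V → Prop) : ℕ → V → V → Prop
  | 0 => fun u v => u = v
  | k + 1 => fun u v => ∃ w, A u w ∧ relPow A k w v

/-- `distEq A u v k` : the directed distance from `u` to `v` is exactly `k`,
i.e. `k` is the length of a shortest directed path from `u` to `v`. -/
def distEq {V : Type*} (A : V → V → Prop) (u v : V) (k : ℕ) : Prop :=
  relPow A k u v ∧ ∀ j < k, ¬ relPow A j u v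

open Classical in
/-- The `D`-weight of vertex `u` under labeling `g`: the sum of the labels of all
vertices whose directed distance from `u` lies in `D`. -/
noncomputable def weightD {V : Type*} [Fintype V] (A : V → V → Prop) (D : Set ℕ)
    (g : V → ℕ) (u : V) : ℕ :=
  ∑ v : V, if ∃ k ∈ D, distEq A u v k then g v else 0

/-- A directed graph (given by its arc relation `A`) is `D`-antimagic if there is a
bijective labeling of the vertices with `{1, …, |V|}` whose `D`-weights are pairwise
distinct. -/
def IsDAntimagic {V : Type*} [Fintype V] (A : V → V → Prop) (D : Set ℕ) : Prop :=
  ∃ g : V → ℕ, Set.BijOn g Set.univ (Set.Icc 1 (Fintype.card V)) ∧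
    Function.Injective (weightD A D g)

/-- A vertex is a source if all its incident arcs are outgoing (no incoming arcs). -/
def IsSource {V : Type*} (A : V → V → Prop) (u : V) : Prop := ∀ v, ¬ A v u

/-- A vertex is a sink if all its incident arcs are incoming (no outgoing arcs). -/
def IsSink {V : Type*} (A : V → V → Prop) (u : V) : Prop := ∀ v, ¬ A u v

/-- The oriented star `K⃗_{1,n}`: vertices are `Option (Fin n)`, with `none` the center
and `some i` the leaves; `σ i = true` iff leaf `i` is a source (its arc points to the
center), and `σ i = false` iff leaf `i` is a sink. -/
def starArc (n : ℕ) (σ : Fin n → Bool) :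
    Option (Fin n) → Option (Fin n) → Prop :=
  fun u w => ∃ i : Fin n,
    (u = some i ∧ w = none ∧ σ i = true) ∨
    (u = none ∧ w = some i ∧ σ i = false)

/-- For every `n ≥ 1` and every orientation, the oriented star
`K⃗_{1,n}` is not `{2}`-antimagic. -/

lemma weight_zero {V : Type*} [Fintype V] (A : V → V → Prop) (g : V → ℕ) (u : V)
    (h : ∀ v, ¬ relPow A 2 u v) : weightD A {2} g u = 0 := by
  classical
  unfold weightD
  apply Finset.sum_eq_zero
  intro v _
  rw [if_neg]
  rintro ⟨k, hk, hd, -⟩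
  simp only [Set.mem_singleton_iff] at hk
  subst hk
  exact h v hd

lemma no_two_from_center (n : ℕ) (σ : Fin n → Bool) (v : Option (Fin n)) :
    ¬ relPow (starArc n σ) 2 none v := by
  rintro ⟨w, ⟨i, hi⟩, w', ⟨j, hj⟩, -⟩
  rcases hi with ⟨h1, -, -⟩ | ⟨-, h2, h3⟩
  · exact nomatch h1
  · subst h2
    rcases hj with ⟨h4, -, h5⟩ | ⟨h6, -, -⟩
    · rw [Option.some_inj] at h4; subst h4; rw [h3] at h5; exact Bool.noConfusion h5
    · exact nomatch h6

theorem orientedStar_not_two_antimagic (n : ℕ) (hn : 1 ≤ n) (σ : Fin n → Bool) :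
    ¬ IsDAntimagic (starArc n σ) {2} := by
  rintro ⟨g, -, hinj⟩
  have hc : weightD (starArc n σ) {2} g none = 0 :=
    weight_zero _ _ _ (no_two_from_center n σ)
  -- find a leaf u with weight 0
  obtain ⟨u, hu0⟩ : ∃ u : Fin n, weightD (starArc n σ) {2} g (some u) = 0 := by
    by_cases hsink : ∃ j, σ j = false
    · obtain ⟨j, hj⟩ := hsink
      refine ⟨j, weight_zero _ _ _ ?_⟩
      rintro v ⟨w, ⟨i, hi⟩, -⟩
      rcases hi with ⟨h1, -, h2⟩ | ⟨h3, -, -⟩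
      · rw [Option.some_inj] at h1; subst h1; rw [hj] at h2; exact Bool.noConfusion h2
      · exact nomatch h3
    · push_neg at hsink
      refine ⟨⟨0, hn⟩, weight_zero _ _ _ ?_⟩
      rintro v ⟨w, ⟨i, hi⟩, w', ⟨j, hj⟩, -⟩
      rcases hi with ⟨-, h1, -⟩ | ⟨h2, -, -⟩
      · subst h1
        rcases hj with ⟨h3, -, -⟩ | ⟨-, -, h4⟩
        · exact nomatch h3
        · exact (hsink j).elim (by simpa using h4)
      · exact nomatch h2
  have := hinj (hu0.trans hc.symm)
  exact nomatch this
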